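/- arXiv:1307.5116 — 3 statements merged into one kernel-verified Lean document; each statement's English description precedes it below -/
import Mathlib

section
/- Let q be a prime number, S a finite set, F : S → S a map whose q-th iterate is the identity (F^[q] = id), and d : S → ℝ a function invariant under F, i.e. d(F(s)) = d(s) for all s ∈ S. For each value v attained by d, let n_v denote the cardinality of {s ∈ S : d(s) = v}, and let m_v be the reduction of n_v modulo q (so 0 ≤ m_v < q). Then the sum of m_v over all distinct values v attained by d is at most the cardinality of Fix(F) = {s ∈ S : F(s) = s}. -/
private lemma iterate_mod_aux {T : Type*} {q : ℕ} (hq : 0 < q) (F : T → T)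
    (hF : F^[q] = id) (n : ℕ) : F^[n] = F^[n % q] := by
  have := hq
  conv_lhs => rw [← Nat.mod_add_div n q]
  rw [Function.iterate_add, Function.iterate_mul, hF, Function.iterate_id, Function.comp_id]

private lemma key_aux {T : Type*} [Fintype T] {q : ℕ} (hq : q.Prime) (F : T → T)
    (hF : F^[q] = id) : Nat.card T % q ≤ Nat.card {t // F t = t} := by
  classical
  haveI : Fact q.Prime := ⟨hq⟩
  haveI : NeZero q := ⟨hq.ne_zero⟩
  have hq0 : 0 < q := hq.pos
  let φ : Multiplicative (ZMod q) →* Function.End T :=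
  { toFun := fun g => F^[(Multiplicative.toAdd g).val]
    map_one' := by
      show F^[(0 : ZMod q).val] = id
      simp [ZMod.val_zero]
    map_mul' := by
      intro a b
      show F^[((Multiplicative.toAdd a) + (Multiplicative.toAdd b)).val] = _
      rw [ZMod.val_add, ← iterate_mod_aux hq0 F hF, Function.iterate_add]
      rfl }
  letI : MulAction (Multiplicative (ZMod q)) T := MulAction.compHom T φ
  have hPG : IsPGroup q (Multiplicative (ZMod q)) := by
    apply IsPGroup.of_card (n := 1)
    simp
  have hmod := hPG.card_modEq_card_fixedPoints (α := T)
  calc Nat.card T % q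
      = Nat.card (MulAction.fixedPoints (Multiplicative (ZMod q)) T) % q := hmod
    _ ≤ Nat.card (MulAction.fixedPoints (Multiplicative (ZMod q)) T) := Nat.mod_le _ _
    _ = Nat.card {t // F t = t} := by
        apply Nat.card_congr
        apply Equiv.subtypeEquivRight
        intro t
        constructor
        · intro h
          have h2 : F^[(Multiplicative.toAdd (Multiplicative.ofAdd (1 : ZMod q))).val] t = t :=
            h (Multiplicative.ofAdd (1 : ZMod q))
          have h1 : (1 : ZMod q).val = 1 := ZMod.val_one q
          simpa [h1] using h2
        · intro ht g
          show F^[(Multiplicative.toAdd g).val] t = t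
          exact Function.iterate_fixed ht _

/-- If `q` is prime, `S` is finite, `F : S → S` satisfies `F^[q] = id`, and
`d : S → ℝ` is `F`-invariant, then the sum over all values `v` attained by `d`
of the mod-`q` reduction of the multiplicity `n_v = |{s : d s = v}|` is at most
the number of fixed points of `F`. -/
theorem sum_mod_multiplicities_le_card_fixed {S : Type*} [Fintype S]
    (q : ℕ) (hq : q.Prime) (F : S → S) (hF : F^[q] = id)
    (d : S → ℝ) (hd : ∀ s, d (F s) = d s) :
    ∑ v ∈ Finset.image d Finset.univ, (Nat.card {s : S // d s = v}) % q
      ≤ Nat.card {s : S // F s = s} := by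
  classical
  have main : ∀ v, (Nat.card {s : S // d s = v}) % q ≤ Nat.card {s : S // F s = s ∧ d s = v} := by
    intro v
    let T := {s : S // d s = v}
    let F' : T → T := fun s => ⟨F s.1, by rw [hd]; exact s.2⟩
    have hiter : ∀ (k : ℕ) (s : T), (F'^[k] s).1 = F^[k] s.1 := by
      intro k
      induction k with
      | zero => intro s; rfl
      | succ n ih =>
        intro s
        rw [Function.iterate_succ_apply, Function.iterate_succ_apply, ih]
    have hF' : F'^[q] = id := by
      funext s
      apply Subtype.ext
      rw [hiter, hF]
      rfl
    have hk := key_aux hq F' hF'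
    refine hk.trans (le_of_eq (Nat.card_congr ?_))
    exact { toFun := fun t => ⟨t.1.1, ⟨congrArg Subtype.val t.2, t.1.2⟩⟩
            invFun := fun s => ⟨⟨s.1, s.2.2⟩, Subtype.ext s.2.1⟩
            left_inv := fun t => by ext; rfl
            right_inv := fun s => rfl }
  calc ∑ v ∈ Finset.image d Finset.univ, (Nat.card {s : S // d s = v}) % q
      ≤ ∑ v ∈ Finset.image d Finset.univ, Nat.card {s : S // F s = s ∧ d s = v} :=
        Finset.sum_le_sum fun v _ => main v
    _ = Nat.card {s : S // F s = s} := by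
        simp only [Nat.card_eq_fintype_card, Fintype.card_subtype]
        rw [Finset.card_eq_sum_card_fiberwise (f := d) (t := Finset.image d Finset.univ)
          (fun s _ => Finset.mem_image_of_mem d (Finset.mem_univ s))]
        apply Finset.sum_congr rfl
        intro v _
        congr 1
        ext s
        simp [and_comm]
end

section
/- Let q and ℓ be distinct prime numbers, A a finite additive abelian group, and F : A ≃+ A an additive automorphism of A whose q-th iterate is the identity. Assume that the only ℓ-primary element of A fixed by F is 0; that is, if s ∈ A satisfies ℓⁿ • s = 0 for some natural number n and F(s) = s, then s = 0. Let d : A → ℝ be a function with d(F(s)) = d(s) for all s ∈ A. Then for every real number v, q divides the cardinality of the set {s ∈ A : s ≠ 0, ℓⁿ • s = 0 for some n, and d(s) = v}. -/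
/-- Let `q ≠ ℓ` be primes, `A` a finite abelian group, and `F` an automorphism
of `A` with `F^[q] = id` whose only fixed ℓ-primary element is `0`. If
`d : A → ℝ` is `F`-invariant, then for every real `v` the number of nonzero
ℓ-primary elements `s` with `d s = v` is divisible by `q`. -/
theorem card_ellPrimary_value_set_dvd {A : Type*} [AddCommGroup A] [Fintype A]
    (q ℓ : ℕ) (hq : q.Prime) (hℓ : ℓ.Prime) (hqℓ : q ≠ ℓ)
    (F : A ≃+ A) (hF : (F : A → A)^[q] = id)
    (hfix : ∀ s : A, (∃ n : ℕ, (ℓ ^ n : ℕ) • s = 0) → F s = s → s = 0)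
    (d : A → ℝ) (hd : ∀ s, d (F s) = d s) (v : ℝ) :
    q ∣ Nat.card {s : A // s ≠ 0 ∧ (∃ n : ℕ, (ℓ ^ n : ℕ) • s = 0) ∧ d s = v} := by
  classical
  haveI : Fact q.Prime := ⟨hq⟩
  haveI : NeZero q := ⟨hq.ne_zero⟩
  set S := {s : A // s ≠ 0 ∧ (∃ n : ℕ, (ℓ ^ n : ℕ) • s = 0) ∧ d s = v}
  -- iterates depend only on exponent mod q
  have hmod : ∀ m : ℕ, (F : A → A)^[m] = (F : A → A)^[m % q] := by
    intro m
    conv_lhs => rw [← Nat.div_add_mod m q]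
    rw [Function.iterate_add, Function.iterate_mul, hF, Function.iterate_id]
    simp
  have hdit : ∀ (k : ℕ) (s : A), d ((F : A → A)^[k] s) = d s := by
    intro k
    induction k with
    | zero => simp
    | succ n ih => intro s; rw [Function.iterate_succ_apply', hd, ih]
  -- F^[k] preserves S
  have hmem : ∀ (k : ℕ) (s : S), ((F : A → A)^[k] s.1 ≠ 0 ∧
      (∃ n : ℕ, (ℓ ^ n : ℕ) • (F : A → A)^[k] s.1 = 0) ∧ d ((F : A → A)^[k] s.1) = v) := by
    intro k s
    obtain ⟨hs0, ⟨n, hn⟩, hsd⟩ := s.2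
    refine ⟨?_, ⟨n, ?_⟩, ?_⟩
    · intro h
      apply hs0
      have : Function.Injective ((F : A → A)^[k]) := Function.Injective.iterate F.injective k
      apply this
      rw [h]
      simpa using (Function.Injective.iterate F.injective k).eq_iff.mpr rfl
      -- fallback below
    · have : ∀ t : A, (F : A → A)^[k] ((ℓ ^ n : ℕ) • t) = (ℓ ^ n : ℕ) • (F : A → A)^[k] t := by
        intro t
        induction k with
        | zero => simp
        | succ m ih => rw [Function.iterate_succ_apply', Function.iterate_succ_apply', ih,
            map_nsmul]
      rw [← this, hn]
      exact Function.iterate_fixed (by simp) k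
    · rw [hdit, hsd]
  -- action of Multiplicative (ZMod q) on S
  letI : SMul (Multiplicative (ZMod q)) S := ⟨fun g s =>
    ⟨(F : A → A)^[(Multiplicative.toAdd g).val] s.1, hmem _ s⟩⟩
  letI : MulAction (Multiplicative (ZMod q)) S :=
    { one_smul := by
        intro s
        apply Subtype.ext
        show (F : A → A)^[(Multiplicative.toAdd (1 : Multiplicative (ZMod q))).val] s.1 = s.1
        simp
      mul_smul := by
        intro g h s
        apply Subtype.ext
        show (F : A → A)^[(Multiplicative.toAdd (g * h)).val] s.1 =
          (F : A → A)^[(Multiplicative.toAdd g).val] ((F : A → A)^[(Multiplicative.toAdd h).val] s.1)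
        rw [← Function.iterate_add_apply]
        have : (Multiplicative.toAdd (g * h)) = Multiplicative.toAdd g + Multiplicative.toAdd h := rfl
        rw [this, ZMod.val_add, ← hmod] }
  have hpg : IsPGroup q (Multiplicative (ZMod q)) := by
    apply IsPGroup.of_card (n := 1)
    simp [Nat.card_eq_fintype_card]
  have key := hpg.card_modEq_card_fixedPoints S
  -- no fixed points
  have hfp : Nat.card (MulAction.fixedPoints (Multiplicative (ZMod q)) S) = 0 := by
    rw [Nat.card_eq_zero]
    left
    constructor
    rintro ⟨s, hs⟩
    obtain ⟨hs0, hsl, _⟩ := s.2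
    apply hs0
    apply hfix s.1 hsl
    have h1 := hs (Multiplicative.ofAdd (1 : ZMod q))
    have : (F : A → A)^[(Multiplicative.toAdd (Multiplicative.ofAdd (1 : ZMod q))).val] s.1 = s.1 :=
      congrArg Subtype.val h1
    have hv : (Multiplicative.toAdd (Multiplicative.ofAdd (1 : ZMod q))).val = 1 := by
      show (1 : ZMod q).val = 1
      rw [ZMod.val_one_eq_one_mod, Nat.mod_eq_of_lt hq.one_lt]
    rw [hv] at this
    simpa using this
  rw [hfp] at key
  exact (Nat.modEq_zero_iff_dvd).mp key
end

section
/- Let q be a prime number, k ≥ 1 a natural number, H an additive subgroup of ℤ/q^kℤ, and B a finite additive abelian group. Suppose there are additive homomorphisms π : H → B and μ : B → ℤ/q^kℤ such that μ(π(h)) = q • h (viewing h as an element of ℤ/q^kℤ) for every h ∈ H. Then |H| ≤ q · |B|. -/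
/-- Transfer-map inequality in the cyclic case: if `q` is prime, `k ≥ 1`,
`H` is a subgroup of `ℤ/q^kℤ`, and there are homomorphisms `π : H → B`,
`μ : B → ℤ/q^kℤ` with `μ (π h) = q • h` for all `h ∈ H`, then
`|H| ≤ q * |B|`. -/
theorem card_subgroup_le_of_transfer_cyclic (q : ℕ) (hq : q.Prime)
    (k : ℕ) (hk : 1 ≤ k) (H : AddSubgroup (ZMod (q ^ k)))
    {B : Type*} [AddCommGroup B] [Fintype B]
    (π : H →+ B) (μ : B →+ ZMod (q ^ k))
    (hμ : ∀ h : H, μ (π h) = q • (h : ZMod (q ^ k))) :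
    Nat.card H ≤ q * Nat.card B := by
  have hqk : (q ^ k : ℕ) ≠ 0 := pow_ne_zero _ hq.pos.ne'
  haveI : NeZero (q ^ k) := ⟨hqk⟩
  set f : H →+ ZMod (q ^ k) := μ.comp π with hf
  -- |H| = |ker f| * |range f|
  have h1 : Nat.card H = Nat.card f.ker * Nat.card f.range := by
    rw [AddSubgroup.card_eq_card_quotient_mul_card_addSubgroup f.ker,
      Nat.card_congr (QuotientAddGroup.quotientKerEquivRange f).toEquiv, mul_comm]
  -- |range f| ≤ |B|
  have h2 : Nat.card f.range ≤ Nat.card B := by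
    calc Nat.card f.range ≤ Nat.card μ.range := by
          apply Nat.card_le_card_of_injective (fun x => (⟨x.1, by
            obtain ⟨h, hh⟩ := x.2
            exact ⟨π h, hh⟩⟩ : μ.range))
          intro a b hab
          rw [Subtype.mk.injEq] at hab
          exact Subtype.ext hab
      _ ≤ Nat.card B := Nat.card_le_card_of_surjective μ.rangeRestrict μ.rangeRestrict_surjective
  -- multiplication by q map
  set m : ZMod (q ^ k) →+ ZMod (q ^ k) := AddMonoidHom.mulLeft (q : ZMod (q ^ k)) with hm
  -- ker f injects into ker m
  have h3 : Nat.card f.ker ≤ Nat.card m.ker := by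
    apply Nat.card_le_card_of_injective (fun x => (⟨(x.1 : ZMod (q ^ k)), by
      have hx := x.2
      simp only [AddMonoidHom.mem_ker, hf, AddMonoidHom.comp_apply] at hx
      have h' : q • ((x.1 : H) : ZMod (q ^ k)) = 0 := (hμ x.1).symm.trans hx
      show (q : ZMod (q ^ k)) * ((x.1 : H) : ZMod (q ^ k)) = 0
      simpa [nsmul_eq_mul] using h'⟩ : m.ker))
    intro a b hab
    rw [Subtype.mk.injEq] at hab
    exact Subtype.ext (Subtype.ext hab)
  -- |range m| = q^(k-1)
  have hrange : Nat.card m.range = q ^ (k - 1) := by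
    have hEq : m.range = AddSubgroup.zmultiples ((q : ℕ) : ZMod (q ^ k)) := by
      ext x
      constructor
      · rintro ⟨y, rfl⟩
        refine ⟨(y.val : ℤ), ?_⟩
        show (_ : ℤ) • _ = (q : ZMod (q ^ k)) * y
        rw [zsmul_eq_mul]
        push_cast
        rw [ZMod.natCast_val, ZMod.cast_id, mul_comm]
      · rintro ⟨n, rfl⟩
        refine ⟨(n : ZMod (q ^ k)), ?_⟩
        show (q : ZMod (q ^ k)) * (n : ZMod (q ^ k)) = n • _
        rw [zsmul_eq_mul, mul_comm]
    have hgcd : Nat.gcd (q ^ k) q = q :=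
      Nat.gcd_eq_right (dvd_pow_self q (by omega))
    have hdiv : q ^ k / q = q ^ (k - 1) := by
      have hpow : q ^ k = q ^ (k - 1) * q := by
        rw [← pow_succ]; congr 1; omega
      rw [hpow, Nat.mul_div_cancel _ hq.pos]
    rw [hEq, Nat.card_zmultiples, ZMod.addOrderOf_coe q hqk, hgcd, hdiv]
  -- |ker m| = q
  have hker : Nat.card m.ker = q := by
    have := AddSubgroup.card_eq_card_quotient_mul_card_addSubgroup m.ker
    rw [Nat.card_congr (QuotientAddGroup.quotientKerEquivRange m).toEquiv, hrange,
      Nat.card_zmod] at this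
    have hpow : q ^ (k - 1) * q = q ^ k := by
      rw [← pow_succ]; congr 1; omega
    have h' : q ^ (k - 1) * q = q ^ (k - 1) * Nat.card m.ker := hpow.trans this
    exact (Nat.eq_of_mul_eq_mul_left (Nat.pos_of_ne_zero (pow_ne_zero _ hq.pos.ne')) h').symm
  calc Nat.card H = Nat.card f.ker * Nat.card f.range := h1
    _ ≤ q * Nat.card B := Nat.mul_le_mul (h3.trans hker.le) h2
end
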